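/- Every (j,k) simple game v is a convex combination of veto games: there exist p ≥ 1, nonnegative reals α_1,...,α_p summing to 1, and non-empty sets F_1,...,F_p ⊆ J^n such that v(x) = Σ_{t=1}^p α_t · u^{F_t}(x) for all x ∈ J^n. -/
import Mathlib


open Finset BigOperators

attribute [local instance] Classical.propDecidable

noncomputable section

variable {n j k : ℕ}

/-- The top element `j-1` of `Fin j`. -/
def topF (j : ℕ) [NeZero j] : Fin j :=
  ⟨j - 1, Nat.sub_lt (Nat.pos_of_ne_zero (NeZero.ne j)) one_pos⟩

/-- The profile equal to the constant `c` on `S` and to `x` off `S`. -/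
def mer (S : Finset (Fin n)) (c : Fin j) (x : Fin n → Fin j) : Fin n → Fin j :=
  fun i => if i ∈ S then c else x i

/-- `(j,k)` simple game: `v 0 = 0`, `v (j-1,…,j-1) = k-1`, monotone. -/
def IsJKGame [NeZero j] [NeZero k] (v : (Fin n → Fin j) → Fin k) : Prop :=
  v (fun _ => 0) = 0 ∧ v (fun _ => topF j) = topF k ∧
    ∀ x y : Fin n → Fin j, (∀ i, x i ≤ y i) → v x ≤ v y

/-- The `(j,k)` simple game with point-veto `a`. -/
def uA [NeZero j] [NeZero k] (a : Fin n → Fin j) (x : Fin n → Fin j) : Fin k :=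
  if ∀ i, a i ≤ x i then topF k else 0

/-- The veto game associated with a set `E` of thresholds. -/
def uE [NeZero j] [NeZero k] (E : Set (Fin n → Fin j)) (x : Fin n → Fin j) : Fin k :=
  if ∃ a ∈ E, ∀ i, a i ≤ x i then topF k else 0

/-- Player `i` is a null player of `v`. -/
def NullPlayer [NeZero j] [NeZero k] (v : (Fin n → Fin j) → Fin k) (i : Fin n) : Prop :=
  ∀ (x : Fin n → Fin j) (y : Fin j), v x = v (Function.update x i y)

/-- Players `i` and `h` are equivalent in `v`. -/
def EquivPlayers [NeZero j] [NeZero k] (v : (Fin n → Fin j) → Fin k) (i h : Fin n) : Prop :=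
  ∀ x : Fin n → Fin j, v x = v (x ∘ Equiv.swap i h)

/-- The average game `ṽ(T) = (1/(jⁿ(k-1))) Σ_x [v((j-1)_T, x_{-T}) - v(0_T, x_{-T})]`. -/
def Cfun [NeZero j] [NeZero k] (v : (Fin n → Fin j) → Fin k) (T : Finset (Fin n)) : ℝ :=
  (1 / ((j : ℝ) ^ n * ((k : ℝ) - 1))) *
    ∑ x : Fin n → Fin j,
      (((v (mer T (topF j) x)).val : ℝ) - ((v (mer T 0 x)).val : ℝ))

/-- The Shapley-Shubik index for `(j,k)` simple games. -/
def Phi [NeZero j] [NeZero k] (v : (Fin n → Fin j) → Fin k) (i : Fin n) : ℝ :=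
  ∑ S ∈ univ.filter (fun S : Finset (Fin n) => i ∈ S),
    ((Nat.factorial (S.card - 1) * Nat.factorial (n - S.card) : ℝ) / (Nat.factorial n : ℝ)) *
      (Cfun v S - Cfun v (S.erase i))

/-- The TU game `v_a(S) = (1/(k-1))[v((j-1)_S, a_{-S}) - v(0_S, a_{-S})]`. -/
def vAgame [NeZero j] [NeZero k] (v : (Fin n → Fin j) → Fin k) (a : Fin n → Fin j)
    (S : Finset (Fin n)) : ℝ :=
  (1 / ((k : ℝ) - 1)) * (((v (mer S (topF j) a)).val : ℝ) - ((v (mer S 0 a)).val : ℝ))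

/-- The parametric power index `Φ^a`. -/
def PhiA [NeZero j] [NeZero k] (v : (Fin n → Fin j) → Fin k) (a : Fin n → Fin j) (i : Fin n) : ℝ :=
  ∑ S ∈ univ.filter (fun S : Finset (Fin n) => i ∈ S),
    ((Nat.factorial (S.card - 1) * Nat.factorial (n - S.card) : ℝ) / (Nat.factorial n : ℝ)) *
      (vAgame v a S - vAgame v a (S.erase i))

/-- The game `w^C`: value `k-1` iff all members of `C` give full support. -/
def wCgame [NeZero j] [NeZero k] (C : Finset (Fin n)) : (Fin n → Fin j) → Fin k :=
  uA (fun i => if i ∈ C then topF j else 0)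

/-- The unanimity TU game `γ_S`. -/
def gammaTU (S T : Finset (Fin n)) : ℝ :=
  if S ⊆ T then 1 else 0

end

theorem stmt4 {n j k : ℕ} [NeZero j] [NeZero k] (hj : 2 ≤ j) (hk : 2 ≤ k)
    (v : (Fin n → Fin j) → Fin k) (hv : IsJKGame v) :
    ∃ (p : ℕ) (_ : 1 ≤ p) (α : Fin p → ℝ) (F : Fin p → Set (Fin n → Fin j)),
      (∀ t, 0 ≤ α t) ∧ (∑ t, α t = 1) ∧ (∀ t, (F t).Nonempty) ∧
        ∀ x : Fin n → Fin j,
          ((v x).val : ℝ) = ∑ t, α t * ((uE (F t) x : Fin k).val : ℝ) := by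
  obtain ⟨h0, htop, hmono⟩ := hv
  have hk1 : (0:ℝ) < (k:ℝ) - 1 := by
    have : (2:ℝ) ≤ (k:ℝ) := by exact_mod_cast hk
    linarith
  refine ⟨k - 1, by omega, fun _ => 1 / ((k:ℝ) - 1),
    fun t => {a | (t:ℕ) + 1 ≤ (v a).val}, ?_, ?_, ?_, ?_⟩
  · intro t; positivity
  · rw [Finset.sum_const, Finset.card_univ, Fintype.card_fin, nsmul_eq_mul]
    have : ((k - 1 : ℕ) : ℝ) = (k:ℝ) - 1 := by
      have : 1 ≤ k := by omega
      push_cast [this]; ring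
    rw [this, mul_one_div, div_self hk1.ne']
  · intro t
    refine ⟨fun _ => topF j, ?_⟩
    simp only [Set.mem_setOf_eq, htop]
    show (t:ℕ) + 1 ≤ (topF k).val
    have := t.isLt
    simp only [topF]
    omega
  · intro x
    have hval : ∀ t : Fin (k-1), ((uE {a | (t:ℕ) + 1 ≤ (v a).val} x : Fin k).val : ℝ)
        = if (t:ℕ) + 1 ≤ (v x).val then (k:ℝ) - 1 else 0 := by
      intro t
      unfold uE
      by_cases h : (t:ℕ) + 1 ≤ (v x).val
      · rw [if_pos ⟨x, h, fun i => le_refl _⟩, if_pos h]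
        have hk1' : 1 ≤ k := by omega
        simp only [topF]
        push_cast [hk1']
        ring
      · rw [if_neg, if_neg h]
        · simp
        · rintro ⟨a, ha, hax⟩
          exact h (le_trans ha (hmono a x hax))
    calc ((v x).val : ℝ)
        = ∑ t : Fin (k-1), if (t:ℕ) + 1 ≤ (v x).val then (1:ℝ) else 0 := by
          rw [Fin.sum_univ_eq_sum_range (fun t => if t + 1 ≤ (v x).val then (1:ℝ) else 0),
            Finset.sum_boole]
          have hlt : (v x).val ≤ k - 1 := by have := (v x).isLt; omega
          have : Finset.filter (fun i => i + 1 ≤ (v x).val) (Finset.range (k-1))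
              = Finset.range (v x).val := by
            ext i; simp only [Finset.mem_filter, Finset.mem_range]; omega
          rw [this, Finset.card_range]
      _ = ∑ t : Fin (k-1), 1 / ((k:ℝ) - 1) *
            ((uE {a | (t:ℕ) + 1 ≤ (v a).val} x : Fin k).val : ℝ) := by
          apply Finset.sum_congr rfl
          intro t _
          rw [hval t]
          by_cases h : (t:ℕ) + 1 ≤ (v x).val <;> simp [h]
          field_simp
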